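/- Let P be a positive opetope, i ∈ ℕ, and p, p' ∈ P_{i+1} − γ(P_{i+2}). Then p <⁻ p' if and only if γ(p) <⁺ γ(p'). -/

import Mathlib

/-- A positive hypergraph: graded faces with codomain functions `γ` and (total) domain
relations `δ`. -/
structure PreOpetope where
  P : ℕ → Type
  γ : ∀ k, P (k+1) → P k
  δ : ∀ k, P (k+1) → Set (P k)

namespace PreOpetope

/-- The lower order `<⁻` on `P (k+1)`: transitive closure of `γ a ∈ δ b`. -/
def ltm (O : PreOpetope) (k : ℕ) : O.P (k+1) → O.P (k+1) → Prop :=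
  Relation.TransGen (fun a b => O.γ k a ∈ O.δ k b)

/-- The lower order in every dimension (empty in dimension `0`). -/
def ltmAll (O : PreOpetope) : ∀ k, O.P k → O.P k → Prop
  | 0 => fun _ _ => False
  | (k+1) => O.ltm k

/-- The upper order `<⁺` on `P k`: transitive closure of
`∃ c, a ∈ δ c ∧ γ c = b`. -/
def ltp (O : PreOpetope) (k : ℕ) : O.P k → O.P k → Prop :=
  Relation.TransGen (fun a b => ∃ c : O.P (k+1), a ∈ O.δ k c ∧ O.γ k c = b)

/-- `O` is a positive opetope: a finite positive hypergraph satisfying globularity,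
strictness, disjointness and pencil linearity, with at most one maximal face
(`P_l − δ(P_{l+1})`) in every dimension. -/
structure IsOpetope (O : PreOpetope) : Prop where
  fin : ∀ k, Finite (O.P k)
  bounded : ∃ n, ∀ k, n < k → IsEmpty (O.P k)
  ne : Nonempty (O.P 0)
  pos : ∀ k (a : O.P (k+1)), (O.δ k a).Nonempty
  δzero : ∀ a : O.P 1, ∃! x, x ∈ O.δ 0 a
  glob_γ : ∀ k (a : O.P (k+2)),
    {x : O.P k | x = O.γ k (O.γ (k+1) a)} =
      {x | ∃ b ∈ O.δ (k+1) a, O.γ k b = x} \ {x | ∃ b ∈ O.δ (k+1) a, x ∈ O.δ k b}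
  glob_δ : ∀ k (a : O.P (k+2)),
    O.δ k (O.γ (k+1) a) =
      {x | ∃ b ∈ O.δ (k+1) a, x ∈ O.δ k b} \ {x | ∃ b ∈ O.δ (k+1) a, O.γ k b = x}
  strict : ∀ k (a : O.P k), ¬ O.ltp k a a
  strict0 : ∀ a b : O.P 0, a = b ∨ O.ltp 0 a b ∨ O.ltp 0 b a
  disj : ∀ k (a b : O.P (k+1)),
    ¬ ((O.ltm k a b ∨ O.ltm k b a) ∧ (O.ltp (k+1) a b ∨ O.ltp (k+1) b a))
  pencil_γ : ∀ k (a b : O.P (k+1)), O.γ k a = O.γ k b →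
    a = b ∨ O.ltp (k+1) a b ∨ O.ltp (k+1) b a
  pencil_δ : ∀ k (x : O.P k) (a b : O.P (k+1)), x ∈ O.δ k a → x ∈ O.δ k b →
    a = b ∨ O.ltp (k+1) a b ∨ O.ltp (k+1) b a
  size : ∀ k (a b : O.P k), (¬ ∃ c : O.P (k+1), a ∈ O.δ k c) →
    (¬ ∃ c : O.P (k+1), b ∈ O.δ k c) → a = b

end PreOpetope

namespace PreOpetopeAux

open PreOpetope

/-- Any `<⁺`-chain ending at `y` exhibits `y` as a codomain. -/
theorem ltp_exists_cod {O : PreOpetope} {k : ℕ} {x y : O.P k} (h : O.ltp k x y) :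
    ∃ c : O.P (k+1), O.γ k c = y := by
  induction h with
  | single h => obtain ⟨c, _, hc⟩ := h; exact ⟨c, hc⟩
  | tail _ h _ => obtain ⟨c, _, hc⟩ := h; exact ⟨c, hc⟩

theorem wf_ltp (O : PreOpetope) (hO : O.IsOpetope) (k : ℕ) :
    WellFounded (O.ltp k) := by
  haveI := hO.fin k
  haveI : IsTrans (O.P k) (O.ltp k) := ⟨fun _ _ _ => Relation.TransGen.trans⟩
  haveI : IsIrrefl (O.P k) (O.ltp k) := ⟨hO.strict k⟩
  exact Finite.wellFounded_of_trans_of_irrefl _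

theorem wf_ltp_flip (O : PreOpetope) (hO : O.IsOpetope) (k : ℕ) :
    WellFounded (fun a b : O.P k => O.ltp k b a) := by
  haveI := hO.fin k
  haveI : IsTrans (O.P k) (fun a b : O.P k => O.ltp k b a) :=
    ⟨fun _ _ _ h1 h2 => Relation.TransGen.trans h2 h1⟩
  haveI : IsIrrefl (O.P k) (fun a b : O.P k => O.ltp k b a) := ⟨hO.strict k⟩
  exact Finite.wellFounded_of_trans_of_irrefl _

/-- Inside `δ α`, from any face one can move along `◁⁻` to a face whose codomain
is `γ (γ α)`. -/
theorem chainC (O : PreOpetope) (hO : O.IsOpetope) {i : ℕ} (α : O.P (i+2)) :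
    ∀ b' ∈ O.δ (i+1) α, ∃ bs ∈ O.δ (i+1) α,
      (b' = bs ∨ O.ltm i b' bs) ∧ O.γ i bs = O.γ i (O.γ (i+1) α) := by
  have hwf : WellFounded (fun u v : O.P (i+1) => O.ltp i (O.γ i v) (O.γ i u)) :=
    InvImage.wf _ (wf_ltp_flip O hO i)
  intro b'
  induction b' using hwf.induction with
  | _ b ih =>
    intro hb
    by_cases h : ∃ b'' ∈ O.δ (i+1) α, O.γ i b ∈ O.δ i b''
    · obtain ⟨b'', hb'', hmem⟩ := h
      have hstep : O.ltp i (O.γ i b) (O.γ i b'') :=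
        Relation.TransGen.single ⟨b'', hmem, rfl⟩
      obtain ⟨bs, hbs, hpath, hγ⟩ := ih b'' hstep hb''
      refine ⟨bs, hbs, Or.inr ?_, hγ⟩
      rcases hpath with rfl | hpath
      · exact Relation.TransGen.single hmem
      · exact Relation.TransGen.head hmem hpath
    · have hmem : O.γ i b ∈
          ({x | ∃ c ∈ O.δ (i+1) α, O.γ i c = x} \
           {x | ∃ c ∈ O.δ (i+1) α, x ∈ O.δ i c} : Set (O.P i)) := by
        refine ⟨⟨b, hb, rfl⟩, ?_⟩
        intro hx
        exact h hx
      rw [← hO.glob_γ i α] at hmem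
      exact ⟨b, hb, Or.inl rfl, hmem⟩

/-- Key lemma: if `p'` is not a codomain, `γ b = γ p'` and `a <⁻ b`, then `a <⁻ p'`. -/
theorem keyK (O : PreOpetope) (hO : O.IsOpetope) {i : ℕ} (p' : O.P (i+1))
    (hp' : ¬ ∃ c : O.P (i+2), O.γ (i+1) c = p') (a : O.P (i+1)) :
    ∀ b : O.P (i+1), O.γ i b = O.γ i p' → O.ltm i a b → O.ltm i a p' := by
  have hwf := wf_ltp O hO (i+1)
  intro b
  induction b using hwf.induction with
  | _ b ih =>
    intro hγ hab
    rcases hO.pencil_γ i b p' hγ with rfl | hbp | hpb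
    · exact hab
    · exact absurd (ltp_exists_cod hbp) hp'
    · obtain ⟨α, hαb⟩ := ltp_exists_cod hpb
      obtain ⟨a', haa', ha'b⟩ := Relation.TransGen.tail'_iff.mp hab
      have hδ : O.γ i a' ∈
          ({x | ∃ c ∈ O.δ (i+1) α, x ∈ O.δ i c} \
           {x | ∃ c ∈ O.δ (i+1) α, O.γ i c = x} : Set (O.P i)) := by
        rw [← hO.glob_δ i α, hαb]; exact ha'b
      obtain ⟨⟨b1, hb1α, hmem⟩, -⟩ := hδ
      obtain ⟨bs, hbsα, hpath, hγs⟩ := chainC O hO α b1 hb1α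
      have habs : O.ltm i a bs := by
        have h1 : O.ltm i a b1 := Relation.TransGen.tail' haa' hmem
        rcases hpath with rfl | hpath
        · exact h1
        · exact h1.trans hpath
      have hlt : O.ltp (i+1) bs b := Relation.TransGen.single ⟨α, hbsα, hαb⟩
      have hγ' : O.γ i bs = O.γ i p' := by rw [hγs, hαb, hγ]
      exact ih bs hlt hγ' habs

/-- From a `<⁺`-chain starting at `γ a`, extract `c` with `γ c = y` and `a <⁻ c`. -/
theorem chainB (O : PreOpetope) {i : ℕ} :
    ∀ {x y : O.P i}, O.ltp i x y →
      ∀ a : O.P (i+1), O.γ i a = x → ∃ c, O.γ i c = y ∧ O.ltm i a c := by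
  intro x y h
  induction h with
  | single h =>
    intro a ha
    obtain ⟨c, hxc, hcy⟩ := h
    refine ⟨c, hcy, Relation.TransGen.single ?_⟩
    rw [ha]; exact hxc
  | tail _ h2 ih =>
    intro a ha
    obtain ⟨c, hc, hac⟩ := ih a ha
    obtain ⟨c2, hmem, hc2⟩ := h2
    refine ⟨c2, hc2, hac.tail ?_⟩
    rw [hc]; exact hmem

end PreOpetopeAux

/-- Let `P` be a positive opetope and `p, p' ∈ P_{i+1} − γ(P_{i+2})`.
Then `p <⁻ p'` iff `γ(p) <⁺ γ(p')`. -/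
theorem stmt_11 (O : PreOpetope) (hO : O.IsOpetope) (i : ℕ)
    (p p' : O.P (i+1))
    (hp : ¬ ∃ c : O.P (i+2), O.γ (i+1) c = p)
    (hp' : ¬ ∃ c : O.P (i+2), O.γ (i+1) c = p') :
    O.ltm i p p' ↔ O.ltp i (O.γ i p) (O.γ i p') := by
  constructor
  · intro h
    exact Relation.TransGen.lift (O.γ i) (fun a b hab => ⟨b, hab, rfl⟩) _ _ h
  · intro h
    obtain ⟨c, hc, hpc⟩ := PreOpetopeAux.chainB O h p rfl
    exact PreOpetopeAux.keyK O hO p' hp' p c hc hpc
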